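/- Let k₁₁ > 0, k₂₂ > 0 and let d₁₁, d₁₂, d₂₂ be real numbers with d₁₁ + d₂₂ > 0, and let ν be real. Define the Routh–Hurwitz coefficients a₁ = d₁₁ + d₂₂, a₂ = k₁₁ + k₂₂ + d₁₁d₂₂ − d₁₂², a₃ = k₁₁d₂₂ + k₂₂d₁₁, a₄ = k₁₁k₂₂ + ν². Then a₁²a₄ + a₃² − a₁a₂a₃ < 0 if and only if ν² < (k₁₁ − k₂₂)²/4 − [(d₁₁ − d₂₂)²(k₁₁ − k₂₂)² − 4(k₁₁d₂₂ + k₂₂d₁₁)(d₁₁d₂₂ − d₁₂²)(d₁₁ + d₂₂)]/(4(d₁₁ + d₂₂)²). -/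

import Mathlib

/-- Bottema's stability condition for the two-degrees-of-freedom circulatory system
with damping: with `a₁ = d₁₁ + d₂₂`, `a₂ = k₁₁ + k₂₂ + d₁₁d₂₂ − d₁₂²`,
`a₃ = k₁₁d₂₂ + k₂₂d₁₁`, `a₄ = k₁₁k₂₂ + ν²`, the Routh–Hurwitz quantity
`H = a₁²a₄ + a₃² − a₁a₂a₃` is negative iff
`ν² < (k₁₁ − k₂₂)²/4 − [(d₁₁ − d₂₂)²(k₁₁ − k₂₂)² − 4(k₁₁d₂₂ + k₂₂d₁₁)(d₁₁d₂₂ − d₁₂²)(d₁₁ + d₂₂)]/(4(d₁₁ + d₂₂)²)`. -/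
theorem bottema_damped_stability_condition (k₁₁ k₂₂ d₁₁ d₁₂ d₂₂ ν : ℝ)
    (hk₁₁ : 0 < k₁₁) (hk₂₂ : 0 < k₂₂) (hd : 0 < d₁₁ + d₂₂) :
    (d₁₁ + d₂₂) ^ 2 * (k₁₁ * k₂₂ + ν ^ 2) + (k₁₁ * d₂₂ + k₂₂ * d₁₁) ^ 2
      - (d₁₁ + d₂₂) * (k₁₁ + k₂₂ + d₁₁ * d₂₂ - d₁₂ ^ 2) * (k₁₁ * d₂₂ + k₂₂ * d₁₁) < 0 ↔
    ν ^ 2 < (k₁₁ - k₂₂) ^ 2 / 4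
      - ((d₁₁ - d₂₂) ^ 2 * (k₁₁ - k₂₂) ^ 2
          - 4 * (k₁₁ * d₂₂ + k₂₂ * d₁₁) * (d₁₁ * d₂₂ - d₁₂ ^ 2) * (d₁₁ + d₂₂))
        / (4 * (d₁₁ + d₂₂) ^ 2) := by
  have hs2 : (0:ℝ) < 4 * (d₁₁ + d₂₂) ^ 2 := by positivity
  have hrw : (k₁₁ - k₂₂) ^ 2 / 4
      - ((d₁₁ - d₂₂) ^ 2 * (k₁₁ - k₂₂) ^ 2
          - 4 * (k₁₁ * d₂₂ + k₂₂ * d₁₁) * (d₁₁ * d₂₂ - d₁₂ ^ 2) * (d₁₁ + d₂₂))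
        / (4 * (d₁₁ + d₂₂) ^ 2)
      = ((d₁₁ + d₂₂) ^ 2 * (k₁₁ - k₂₂) ^ 2
          - ((d₁₁ - d₂₂) ^ 2 * (k₁₁ - k₂₂) ^ 2
            - 4 * (k₁₁ * d₂₂ + k₂₂ * d₁₁) * (d₁₁ * d₂₂ - d₁₂ ^ 2) * (d₁₁ + d₂₂)))
        / (4 * (d₁₁ + d₂₂) ^ 2) := by
    field_simp
  rw [hrw, lt_div_iff₀ hs2]
  constructor <;> intro h <;> nlinarith [h]
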